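/- Let p ∈ [1,∞), let ρ : ℝ^N → ℝ be continuous and strictly positive with ∫_{ℝ^N} ρ(x) dx = 1, let β > 0, let J be nonnegative, measurable, supported in the closed unit ball with ∫ J = 1, let g : ℝ → ℝ be measurable with |g(s)| ≤ a for all s, and let h : ℝ×ℝ → ℝ be any function. Let ε ≥ 0 and suppose u : [τ,∞) → L^p(ℝ^N,ρ) satisfies u(t,x) = e^{−(t−τ)} u_τ(x) + ∫_τ^t e^{−(t−s)} g(β(J*u)(s,x) + β h(s,u(s,x))) ds for all t ≥ τ, with ‖u_τ‖_{L^p(ℝ^N,ρ)} ≤ a + ε. Then ‖u(t)‖_{L^p(ℝ^N,ρ)} ≤ a + ε for every t ≥ τ (the ball of radius a + ε is positively invariant). -/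

import Mathlib

open MeasureTheory Set
open scoped ENNReal

noncomputable section

abbrev Euc (N : ℕ) := EuclideanSpace ℝ (Fin N)

/-- Weighted `L^p` norm `(∫ ρ |u|^p)^{1/p}`. -/
def wnorm {N : ℕ} (p : ℝ) (ρ u : Euc N → ℝ) : ℝ :=
  (∫ x, ρ x * |u x| ^ p) ^ (1 / p)

/-- Convolution `(J*u)(x) = ∫ J(x-y) u(y) dy`. -/
def conv {N : ℕ} (J u : Euc N → ℝ) (x : Euc N) : ℝ :=
  ∫ y, J (x - y) * u y

/-- Membership in the weighted Lebesgue space `L^p(ℝ^N, ρ)`. -/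
def MemWLp {N : ℕ} (p : ℝ) (ρ u : Euc N → ℝ) : Prop :=
  AEStronglyMeasurable u volume ∧ Integrable fun x => ρ x * |u x| ^ p

/-- `u` satisfies the variation-of-constants identity on `[τ, ∞)` with initial datum `uτ`. -/
def IsSolution {N : ℕ} (J : Euc N → ℝ) (g : ℝ → ℝ) (h : ℝ → ℝ → ℝ) (β τ : ℝ)
    (uτ : Euc N → ℝ) (u : ℝ → Euc N → ℝ) : Prop :=
  ∀ t ≥ τ, ∀ x, u t x = Real.exp (-(t - τ)) * uτ x +
    ∫ s in τ..t, Real.exp (-(t - s)) * g (β * conv J (u s) x + β * h s (u s x))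

theorem stmt9 {N : ℕ} (p : ℝ) (hp : 1 ≤ p)
    (ρ : Euc N → ℝ) (hρc : Continuous ρ) (hρpos : ∀ x, 0 < ρ x) (hρ1 : ∫ x, ρ x = 1)
    (β : ℝ) (hβ : 0 < β)
    (J : Euc N → ℝ) (hJnn : ∀ x, 0 ≤ J x) (hJm : Measurable J)
    (hJsupp : ∀ x : Euc N, 1 < ‖x‖ → J x = 0) (hJ1 : ∫ x, J x = 1)
    (g : ℝ → ℝ) (hgm : Measurable g) (a : ℝ) (hga : ∀ s, |g s| ≤ a)
    (h : ℝ → ℝ → ℝ)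
    (ε : ℝ) (hε : 0 ≤ ε)
    (τ : ℝ) (uτ : Euc N → ℝ) (huτ : MemWLp p ρ uτ) (huτr : wnorm p ρ uτ ≤ a + ε)
    (u : ℝ → Euc N → ℝ) (hsol : IsSolution J g h β τ uτ u) :
    ∀ t ≥ τ, wnorm p ρ (u t) ≤ a + ε := by
  intro t ht
  have hp0 : (0:ℝ) < p := lt_of_lt_of_le one_pos hp
  have ha : (0:ℝ) ≤ a := (abs_nonneg _).trans (hga 0)
  set c := Real.exp (-(t - τ)) with hcdef
  have hc0 : (0:ℝ) < c := Real.exp_pos _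
  have hc1 : c ≤ 1 := Real.exp_le_one_iff.mpr (by linarith)
  set d := (1 - c) * a with hddef
  have hd0 : (0:ℝ) ≤ d := mul_nonneg (by linarith) ha
  -- pointwise bound
  have hint : (∫ s in τ..t, Real.exp (-(t - s))) = 1 - c := by
    have hrw : (fun s => Real.exp (-(t - s))) = fun s => Real.exp (s - t) := by
      funext s; ring_nf
    rw [hrw, intervalIntegral.integral_comp_sub_right (fun s => Real.exp s) t,
      integral_exp]
    simp [hcdef]
  have hpt : ∀ x, |u t x| ≤ c * |uτ x| + d := by
    intro x
    rw [hsol t ht x]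
    refine (abs_add_le _ _).trans ?_
    have h1 : |c * uτ x| = c * |uτ x| := by rw [abs_mul, abs_of_pos hc0]
    have h2 : |∫ s in τ..t,
        Real.exp (-(t - s)) * g (β * conv J (u s) x + β * h s (u s x))| ≤ d := by
      have hb : IntervalIntegrable (fun s => a * Real.exp (-(t - s))) volume τ t := by
        apply Continuous.intervalIntegrable
        continuity
      have hb2 := intervalIntegral.norm_integral_le_of_norm_le
        (f := fun s => Real.exp (-(t - s)) * g (β * conv J (u s) x + β * h s (u s x)))
        (μ := volume) (a := τ) (b := t) ht
        (Filter.Eventually.of_forall (fun s _ => by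
          rw [Real.norm_eq_abs, abs_mul, abs_of_pos (Real.exp_pos _)]
          calc Real.exp (-(t - s)) * |g _| ≤ Real.exp (-(t - s)) * a :=
                mul_le_mul_of_nonneg_left (hga _) (Real.exp_pos _).le
            _ = a * Real.exp (-(t - s)) := mul_comm _ _)) hb
      rw [Real.norm_eq_abs] at hb2
      refine hb2.trans ?_
      rw [intervalIntegral.integral_const_mul, hint]
      rw [hddef]; ring_nf; exact le_refl _
    exact add_le_add (le_of_eq h1) h2
  -- measure-theoretic part
  have hmρ : Measurable ρ := hρc.measurable
  have hρint : Integrable ρ := by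
    by_contra hni
    rw [integral_undef hni] at hρ1; norm_num at hρ1
  have hp0' : (0:ℝ) ≤ 1 / p := by positivity
  have hpne : p ≠ 0 := ne_of_gt hp0
  -- lintegral of weighted p-th power of uτ
  set A : ℝ≥0∞ := ∫⁻ x, ENNReal.ofReal (ρ x) * ENNReal.ofReal |uτ x| ^ p with hA
  have hofReal_pt : ∀ (v : Euc N → ℝ) (x : Euc N),
      ENNReal.ofReal (ρ x * |v x| ^ p) = ENNReal.ofReal (ρ x) * ENNReal.ofReal |v x| ^ p := by
    intro v x
    rw [ENNReal.ofReal_mul (hρpos x).le, ENNReal.ofReal_rpow_of_nonneg (abs_nonneg _) hp0.le]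
  have hIτnn : (0:ℝ) ≤ ∫ x, ρ x * |uτ x| ^ p :=
    integral_nonneg fun x => mul_nonneg (hρpos x).le (Real.rpow_nonneg (abs_nonneg _) p)
  have hAeq : A = ENNReal.ofReal (∫ x, ρ x * |uτ x| ^ p) := by
    rw [MeasureTheory.ofReal_integral_eq_lintegral_ofReal huτ.2
      (Filter.Eventually.of_forall fun x =>
        mul_nonneg (hρpos x).le (Real.rpow_nonneg (abs_nonneg _) p))]
    simp_rw [hofReal_pt uτ]
    exact hA
  have hAwn : A ^ (1/p) = ENNReal.ofReal (wnorm p ρ uτ) := by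
    rw [hAeq, wnorm, ← ENNReal.ofReal_rpow_of_nonneg hIτnn hp0']
  -- Minkowski setup
  set G : Euc N → ℝ≥0∞ := fun x =>
    ENNReal.ofReal (ρ x) ^ (1/p) * (ENNReal.ofReal c * ENNReal.ofReal |uτ x|) with hG
  set H : Euc N → ℝ≥0∞ := fun x => ENNReal.ofReal (ρ x) ^ (1/p) * ENNReal.ofReal d with hH
  have hGm : AEMeasurable G volume := by
    have h1 : AEMeasurable (fun x => ENNReal.ofReal |uτ x|) volume := by
      have := huτ.1.norm.aemeasurable
      simp only [Real.norm_eq_abs] at this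
      exact this.ennreal_ofReal
    exact ((hmρ.ennreal_ofReal.pow_const (1/p)).aemeasurable).mul (aemeasurable_const.mul h1)
  have hHm : AEMeasurable H volume :=
    ((hmρ.ennreal_ofReal.pow_const (1/p)).aemeasurable).mul aemeasurable_const
  set L : ℝ≥0∞ := ∫⁻ x, ENNReal.ofReal (ρ x) * ENNReal.ofReal |u t x| ^ p with hL
  have hrppow : ∀ (y : ℝ≥0∞), (y ^ (1/p)) ^ p = y := by
    intro y
    rw [← ENNReal.rpow_mul, one_div_mul_cancel hpne, ENNReal.rpow_one]
  have step1 : L ≤ ∫⁻ x, (G x + H x) ^ p := by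
    rw [hL]
    refine lintegral_mono fun x => ?_
    have hb : ENNReal.ofReal |u t x| ≤ ENNReal.ofReal c * ENNReal.ofReal |uτ x|
        + ENNReal.ofReal d := by
      rw [← ENNReal.ofReal_mul hc0.le, ← ENNReal.ofReal_add (by positivity) hd0]
      exact ENNReal.ofReal_le_ofReal (hpt x)
    calc ENNReal.ofReal (ρ x) * ENNReal.ofReal |u t x| ^ p
        = (ENNReal.ofReal (ρ x) ^ (1/p) * ENNReal.ofReal |u t x|) ^ p := by
          rw [ENNReal.mul_rpow_of_nonneg _ _ hp0.le, hrppow]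
      _ ≤ (G x + H x) ^ p := by
          apply ENNReal.rpow_le_rpow _ hp0.le
          rw [hG, hH, ← mul_add]
          exact mul_le_mul_right hb _
  have step3 : (∫⁻ x, (G x + H x) ^ p) ^ (1/p)
      ≤ (∫⁻ x, G x ^ p) ^ (1/p) + (∫⁻ x, H x ^ p) ^ (1/p) := by
    have := ENNReal.lintegral_Lp_add_le hGm hHm hp
    simpa using this
  have hGint : (∫⁻ x, G x ^ p) ^ (1/p) = ENNReal.ofReal c * ENNReal.ofReal (wnorm p ρ uτ) := by
    have hpt2 : ∀ x, G x ^ p = ENNReal.ofReal c ^ p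
        * (ENNReal.ofReal (ρ x) * ENNReal.ofReal |uτ x| ^ p) := by
      intro x
      rw [hG]
      rw [ENNReal.mul_rpow_of_nonneg _ _ hp0.le, ENNReal.mul_rpow_of_nonneg _ _ hp0.le, hrppow]
      ring
    simp_rw [hpt2]
    rw [lintegral_const_mul' _ _ (ENNReal.rpow_ne_top_of_nonneg hp0.le ENNReal.ofReal_ne_top),
      ENNReal.mul_rpow_of_nonneg _ _ hp0', ← ENNReal.rpow_mul,
      mul_one_div_cancel hpne, ENNReal.rpow_one, ← hA, hAwn]
  have hρlint : (∫⁻ x, ENNReal.ofReal (ρ x)) = 1 := by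
    rw [← MeasureTheory.ofReal_integral_eq_lintegral_ofReal hρint
      (Filter.Eventually.of_forall fun x => (hρpos x).le), hρ1, ENNReal.ofReal_one]
  have hHint : (∫⁻ x, H x ^ p) ^ (1/p) = ENNReal.ofReal d := by
    have hpt2 : ∀ x, H x ^ p = ENNReal.ofReal d ^ p * ENNReal.ofReal (ρ x) := by
      intro x
      rw [hH, ENNReal.mul_rpow_of_nonneg _ _ hp0.le, hrppow]
      ring
    simp_rw [hpt2]
    rw [lintegral_const_mul' _ _ (ENNReal.rpow_ne_top_of_nonneg hp0.le ENNReal.ofReal_ne_top),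
      hρlint, mul_one, ← ENNReal.rpow_mul, mul_one_div_cancel hpne, ENNReal.rpow_one]
  have hwnn : 0 ≤ wnorm p ρ uτ := Real.rpow_nonneg hIτnn _
  have hRHSnn : (0:ℝ) ≤ c * wnorm p ρ uτ + d := by positivity
  have hLle : L ^ (1/p) ≤ ENNReal.ofReal (c * wnorm p ρ uτ + d) := by
    calc L ^ (1/p) ≤ (∫⁻ x, (G x + H x) ^ p) ^ (1/p) := ENNReal.rpow_le_rpow step1 hp0'
      _ ≤ (∫⁻ x, G x ^ p) ^ (1/p) + (∫⁻ x, H x ^ p) ^ (1/p) := step3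
      _ = ENNReal.ofReal c * ENNReal.ofReal (wnorm p ρ uτ) + ENNReal.ofReal d := by
          rw [hGint, hHint]
      _ = ENNReal.ofReal (c * wnorm p ρ uτ + d) := by
          rw [← ENNReal.ofReal_mul hc0.le, ← ENNReal.ofReal_add (by positivity) hd0]
  -- back to the real-valued wnorm
  have hItnn : (0:ℝ) ≤ ∫ x, ρ x * |u t x| ^ p :=
    integral_nonneg fun x => mul_nonneg (hρpos x).le (Real.rpow_nonneg (abs_nonneg _) p)
  have hIle : (∫ x, ρ x * |u t x| ^ p) ≤ L.toReal := by
    by_cases hi : Integrable (fun x => ρ x * |u t x| ^ p)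
    · have : ENNReal.ofReal (∫ x, ρ x * |u t x| ^ p) = L := by
        rw [MeasureTheory.ofReal_integral_eq_lintegral_ofReal hi
          (Filter.Eventually.of_forall fun x =>
            mul_nonneg (hρpos x).le (Real.rpow_nonneg (abs_nonneg _) p)), hL]
        simp_rw [hofReal_pt (u t)]
      rw [← this, ENNReal.toReal_ofReal hItnn]
    · rw [integral_undef hi]; exact ENNReal.toReal_nonneg
  have hfinal : wnorm p ρ (u t) ≤ c * wnorm p ρ uτ + d := by
    rw [wnorm]
    calc (∫ x, ρ x * |u t x| ^ p) ^ (1/p) ≤ L.toReal ^ (1/p) :=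
          Real.rpow_le_rpow hItnn hIle hp0'
      _ = (L ^ (1/p)).toReal := ENNReal.toReal_rpow _ _
      _ ≤ (ENNReal.ofReal (c * wnorm p ρ uτ + d)).toReal :=
          ENNReal.toReal_mono ENNReal.ofReal_ne_top hLle
      _ = c * wnorm p ρ uτ + d := ENNReal.toReal_ofReal hRHSnn
  have : c * wnorm p ρ uτ + d ≤ a + ε := by
    rw [hddef]
    nlinarith [mul_le_mul_of_nonneg_left huτr hc0.le, mul_le_mul_of_nonneg_right hc1 hε]
  linarith
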